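/- arXiv:1403.6080 — 2 statements merged into one kernel-verified Lean document; each statement's English description precedes it below -/
import Mathlib

section
/- Let m ≥ 1 and let M₁, …, M_m be N×N complex matrices. Let Z be the mN×mN cyclic block matrix built from M₁, …, M_m. Then for every x ∈ ℂ, det(x I_{mN} − Z^m) = (det(x I_N − M₁ M₂ ⋯ M_m))^m; in particular the eigenvalue multiset of Z^m consists of m copies of the eigenvalue multiset of M₁ ⋯ M_m. -/
open MeasureTheory ProbabilityTheory Filter Topology Matrix
open scoped ENNReal NNReal

noncomputable section

namespace Paper

/-- Matrices inherit the product measurable structure. -/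
instance matrixMeasurableSpace {k l R : Type*} [MeasurableSpace R] :
    MeasurableSpace (Matrix k l R) :=
  inferInstanceAs (MeasurableSpace (k → l → R))

/-- The ordered product `M 0 * M 1 * ⋯ * M (m-1)` of matrices. -/
def ordProd {α : Type*} [Ring α] {n : Type*} [Fintype n] [DecidableEq n] {m : ℕ}
    (M : Fin m → Matrix n n α) : Matrix n n α :=
  (List.ofFn M).prod

/-- The `mN × mN` cyclic block matrix with `(k, k+1)` block `M k` (cyclically). -/
def cyclicBlock {α : Type*} [Zero α] {m N : ℕ} (M : Fin m → Matrix (Fin N) (Fin N) α) :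
    Matrix (Fin m × Fin N) (Fin m × Fin N) α :=
  fun p q => if q.1.val = (p.1.val + 1) % m then M p.1 p.2 q.2 else 0

/-- Complexification of a real matrix. -/
def matC {k l : Type*} (M : Matrix k l ℝ) : Matrix k l ℂ := M.map (fun x => (x : ℂ))

/-- Empirical spectral measure of a square complex matrix: the uniform probability measure
on the eigenvalues (roots of the characteristic polynomial), with multiplicity. -/
def espec {n : Type*} [Fintype n] [DecidableEq n] (M : Matrix n n ℂ) : Measure ℂ :=
  ((Fintype.card n : ℝ≥0∞))⁻¹ • ((M.charpoly.roots.map Measure.dirac).sum)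

/-- The measure `F_m` on `ℂ`, with density `(mπ)⁻¹ |z|^{2/m-2}` on the unit disk. -/
def Fm (m : ℕ) : Measure ℂ :=
  volume.withDensity fun z =>
    if ‖z‖ ≤ 1 then
      ENNReal.ofReal (((m : ℝ) * Real.pi)⁻¹ * ‖z‖ ^ ((2 : ℝ) / m - 2))
    else 0

/-- The circular law: uniform probability measure on the closed unit disk. -/
def circLaw : Measure ℂ :=
  (ENNReal.ofReal Real.pi)⁻¹ • volume.restrict {z : ℂ | ‖z‖ ≤ 1}

/-- Index type for the independent entries of an elliptic random matrix. -/
abbrev EIdx (N : ℕ) := Fin N ⊕ {p : Fin N × Fin N // p.1 < p.2}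

/-- Value type of each coordinate. -/
def EType (N : ℕ) : EIdx N → Type := fun k => Sum.rec (fun _ => ℝ) (fun _ => ℝ × ℝ) k

instance (N : ℕ) (k : EIdx N) : MeasurableSpace (EType N k) := by
  cases k <;> · dsimp [EType]; infer_instance

/-- The family of diagonal entries and off-diagonal mirror pairs of a random matrix. -/
def entryFam {Ω : Type*} {N : ℕ} (Y : Ω → Matrix (Fin N) (Fin N) ℝ) :
    (k : EIdx N) → Ω → EType N k
  | Sum.inl i => fun ω => Y ω i i
  | Sum.inr p => fun ω => (Y ω p.1.1 p.1.2, Y ω p.1.2 p.1.1)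

/-- `Y` is a real elliptic random matrix with atom variables `(ξ, ζ)`. -/
structure IsElliptic {Ω : Type*} [MeasurableSpace Ω] (P : Measure Ω) {N : ℕ}
    (ξ : Ω → ℝ × ℝ) (ζ : Ω → ℝ) (Y : Ω → Matrix (Fin N) (Fin N) ℝ) : Prop where
  meas : ∀ i j, Measurable fun ω => Y ω i j
  indep : iIndepFun (entryFam Y) P
  offdiag_dist : ∀ i j : Fin N, i < j →
    Measure.map (fun ω => (Y ω i j, Y ω j i)) P = Measure.map ξ P
  diag_dist : ∀ i : Fin N, Measure.map (fun ω => Y ω i i) P = Measure.map ζ P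

/-- Assumption (A) on the atom variables, with moment exponent `τ`. -/
structure AssumptionA {Ω : Type*} [MeasurableSpace Ω] (P : Measure Ω)
    (ξ : Ω → ℝ × ℝ) (ζ : Ω → ℝ) (τ : ℝ) : Prop where
  tau_pos : 0 < τ
  meas : Measurable ξ
  meas_diag : Measurable ζ
  mean_fst : ∫ ω, (ξ ω).1 ∂P = 0
  mean_snd : ∫ ω, (ξ ω).2 ∂P = 0
  var_fst : ∫ ω, (ξ ω).1 ^ 2 ∂P = 1
  var_snd : ∫ ω, (ξ ω).2 ^ 2 ∂P = 1
  moment : (∫⁻ ω, ENNReal.ofReal (|(ξ ω).1| ^ (2 + τ)) ∂P)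
      + (∫⁻ ω, ENNReal.ofReal (|(ξ ω).2| ^ (2 + τ)) ∂P) < ⊤
  corr_lt_one : |∫ ω, (ξ ω).1 * (ξ ω).2 ∂P| < 1
  diag_mean : ∫ ω, ζ ω ∂P = 0
  diag_var : ∫⁻ ω, ENNReal.ofReal ((ζ ω) ^ 2) ∂P < ⊤

/-- `Y` is a real symmetric Wigner matrix with atom variable `ξ`. -/
structure IsWigner {Ω : Type*} [MeasurableSpace Ω] (P : Measure Ω) {N : ℕ}
    (ξ : Ω → ℝ) (Y : Ω → Matrix (Fin N) (Fin N) ℝ) : Prop where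
  symm : ∀ ω, (Y ω).IsSymm
  meas : ∀ i j, Measurable fun ω => Y ω i j
  indep : iIndepFun
    (fun (p : {p : Fin N × Fin N // p.1 ≤ p.2}) => fun ω => Y ω p.1.1 p.1.2) P
  dist : ∀ i j : Fin N, i ≤ j → Measure.map (fun ω => Y ω i j) P = Measure.map ξ P

/-- Squared Hilbert–Schmidt norm of a real matrix. -/
def hsSq {k l : Type*} [Fintype k] [Fintype l] (M : Matrix k l ℝ) : ℝ :=
  ∑ i, ∑ j, (M i j) ^ 2

/-- The L2 operator norm of a complex square matrix. -/
def opNorm {n : Type*} [Fintype n] [DecidableEq n] (M : Matrix n n ℂ) : ℝ :=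
  ‖Matrix.toEuclideanCLM (𝕜 := ℂ) M‖

/-- The least singular value of a complex square matrix. -/
def leastSV {n : Type*} [Fintype n] [DecidableEq n] (M : Matrix n n ℂ) : ℝ :=
  ⨅ x : {x : EuclideanSpace ℂ n // ‖x‖ = 1}, ‖(Matrix.toEuclideanCLM (𝕜 := ℂ) M) x.1‖

/-- The Hermitization (Hermitian dilation) of `X`, viewed as a `2m × 2m` array of
`N × N` blocks. -/
def hermDil {m N : ℕ} (X : Matrix (Fin m × Fin N) (Fin m × Fin N) ℂ) :
    Matrix ((Fin m ⊕ Fin m) × Fin N) ((Fin m ⊕ Fin m) × Fin N) ℂ :=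
  fun p q =>
    match p, q with
    | (Sum.inl a, i), (Sum.inr b, j) => X (a, i) (b, j)
    | (Sum.inr a, i), (Sum.inl b, j) => star (X (b, j) (a, i))
    | _, _ => 0

/-- The `2m × 2m` matrix `q = [[η I_m, z I_m], [z̄ I_m, η I_m]]`. -/
def qmat (m : ℕ) (z η : ℂ) : Matrix (Fin m ⊕ Fin m) (Fin m ⊕ Fin m) ℂ :=
  Matrix.fromBlocks (η • 1) (z • 1) ((starRingEnd ℂ z) • 1) (η • 1)

/-- Kronecker product `q ⊗ I_N`. -/
def kron {m N : ℕ} (q : Matrix (Fin m ⊕ Fin m) (Fin m ⊕ Fin m) ℂ) :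
    Matrix ((Fin m ⊕ Fin m) × Fin N) ((Fin m ⊕ Fin m) × Fin N) ℂ :=
  fun p r => if p.2 = r.2 then q p.1 r.1 else 0

/-- Partial (normalized block) trace of a `2mN × 2mN` matrix, a `2m × 2m` matrix. -/
def blockTr {m N : ℕ}
    (R : Matrix ((Fin m ⊕ Fin m) × Fin N) ((Fin m ⊕ Fin m) × Fin N) ℂ) :
    Matrix (Fin m ⊕ Fin m) (Fin m ⊕ Fin m) ℂ :=
  fun a b => (N : ℂ)⁻¹ * ∑ i : Fin N, R (a, i) (b, i)

/-- The resolvent `(H - q ⊗ I_N)⁻¹` of the Hermitization of `X`. -/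
def resolvent {m N : ℕ} (X : Matrix (Fin m × Fin N) (Fin m × Fin N) ℂ)
    (q : Matrix (Fin m ⊕ Fin m) (Fin m ⊕ Fin m) ℂ) :
    Matrix ((Fin m ⊕ Fin m) × Fin N) ((Fin m ⊕ Fin m) × Fin N) ℂ :=
  (hermDil X - kron q)⁻¹

/-- The matrix-valued Stieltjes transform `Γ(q)`. -/
def GammaMat {m N : ℕ} (X : Matrix (Fin m × Fin N) (Fin m × Fin N) ℂ)
    (q : Matrix (Fin m ⊕ Fin m) (Fin m ⊕ Fin m) ℂ) :
    Matrix (Fin m ⊕ Fin m) (Fin m ⊕ Fin m) ℂ :=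
  blockTr (resolvent X q)

/-- `X_N(ω)`: the normalized complexified cyclic block matrix of the `Y_{N,k}`. -/
def XN {Ω : Type*} {m N : ℕ} (Y : Fin m → Ω → Matrix (Fin N) (Fin N) ℝ) (ω : Ω) :
    Matrix (Fin m × Fin N) (Fin m × Fin N) ℂ :=
  matC (((N : ℝ) ^ (-(1 : ℝ) / 2)) • cyclicBlock (fun k => Y k ω))

/-- Entrywise expectation of a random matrix. -/
def expMat {Ω : Type*} [MeasurableSpace Ω] (P : Measure Ω) {k l : Type*}
    (F : Ω → Matrix k l ℂ) : Matrix k l ℂ :=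
  fun a b => ∫ ω, F ω a b ∂P

/-- Zero out the `k`-th row and `k`-th column. -/
def zeroRC {α : Type*} [Zero α] {N : ℕ} (k : Fin N) (M : Matrix (Fin N) (Fin N) α) :
    Matrix (Fin N) (Fin N) α :=
  fun i j => if i = k ∨ j = k then 0 else M i j

/-- Truncation of a real random variable at level `c`, recentered. -/
def trunc {Ω : Type*} [MeasurableSpace Ω] (P : Measure Ω) (f : Ω → ℝ) (c : ℝ) : Ω → ℝ :=
  fun ω => (if |f ω| ≤ c then f ω else 0) - ∫ ω', (if |f ω'| ≤ c then f ω' else 0) ∂P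

/-- Truncated and renormalized random variable. -/
def truncNorm {Ω : Type*} [MeasurableSpace Ω] (P : Measure Ω) (f : Ω → ℝ) (c : ℝ) : Ω → ℝ :=
  fun ω => trunc P f c ω / Real.sqrt (variance (trunc P f c) P)

/-- The truncated matrix `Ŷ`: zero diagonal, truncated renormalized off-diagonal entries. -/
def truncMatrix {Ω : Type*} [MeasurableSpace Ω] (P : Measure Ω) {N : ℕ}
    (Y : Ω → Matrix (Fin N) (Fin N) ℝ) (c : ℝ) (ω : Ω) : Matrix (Fin N) (Fin N) ℝ :=
  fun i j => if i = j then 0 else truncNorm P (fun ω' => Y ω' i j) c ω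

/-- Empirical spectral distribution function (for Hermitian matrices: counts eigenvalues
of real part at most `x`). -/
def esdF {n : Type*} [Fintype n] [DecidableEq n] (M : Matrix n n ℂ) (x : ℝ) : ℝ :=
  ((M.charpoly.roots.filter (fun lam => lam.re ≤ x)).card : ℝ) / Fintype.card n

/-- Levy distance between two distribution functions. -/
def levyDist (F G : ℝ → ℝ) : ℝ :=
  sInf {ε : ℝ | 0 < ε ∧ ∀ x, F (x - ε) - ε ≤ G x ∧ G x ≤ F (x + ε) + ε}

/-- Singular values of a complex square matrix. -/
def svals {n : Type*} [Fintype n] [DecidableEq n] (M : Matrix n n ℂ) (i : n) : ℝ :=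
  Real.sqrt ((Matrix.isHermitian_conjTranspose_mul_self M).eigenvalues i)

/-- Distribution function `x ↦ ν_M((-∞, x))` of the symmetrized empirical singular value
measure. -/
def nuCDF {n : Type*} [Fintype n] [DecidableEq n] (M : Matrix n n ℂ) (x : ℝ) : ℝ :=
  (((Finset.univ.filter fun i => svals M i < x).card
      + (Finset.univ.filter fun i => -svals M i < x).card : ℕ) : ℝ)
    / (2 * Fintype.card n)

/-- The imaginary part of a complex square matrix. -/
def imPart {n : Type*} (q : Matrix n n ℂ) : Matrix n n ℂ :=
  ((2 * Complex.I)⁻¹ : ℂ) • (q - qᴴ)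

end Paper


section CyclicAux
open Matrix Polynomial
open Fin.NatCast

variable {n : Type*} [Fintype n] [DecidableEq n]

/-- charpoly is invariant under swapping the factors of a product. -/
theorem charpoly_mul_comm' (A B : Matrix n n ℂ) :
    (A * B).charpoly = (B * A).charpoly := by
  have hrev : (A * B).charpoly.reverse = (B * A).charpoly.reverse := by
    rw [Matrix.reverse_charpoly, Matrix.reverse_charpoly]
    unfold Matrix.charpolyRev
    have h1 : ((A * B).map C : Matrix n n ℂ[X]) = A.map C * B.map C :=
      Matrix.map_mul (f := (C : ℂ →+* ℂ[X]))
    have h2 : ((B * A).map C : Matrix n n ℂ[X]) = B.map C * A.map C :=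
      Matrix.map_mul (f := (C : ℂ →+* ℂ[X]))
    rw [h1, h2, ← smul_mul_assoc, Matrix.det_one_sub_mul_comm, mul_smul_comm]
  have hd1 : (A * B).charpoly.natDegree = Fintype.card n := charpoly_natDegree_eq_dim _
  have hd2 : (B * A).charpoly.natDegree = Fintype.card n := charpoly_natDegree_eq_dim _
  ext k
  rcases le_or_gt k (Fintype.card n) with hk | hk
  · have e1 := Polynomial.coeff_reverse (A * B).charpoly (Fintype.card n - k)
    have e2 := Polynomial.coeff_reverse (B * A).charpoly (Fintype.card n - k)
    rw [hd1] at e1; rw [hd2] at e2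
    rw [Polynomial.revAt_le (by omega), Nat.sub_sub_self hk] at e1 e2
    rw [← e1, ← e2, hrev]
  · rw [Polynomial.coeff_eq_zero_of_natDegree_lt (by omega),
      Polynomial.coeff_eq_zero_of_natDegree_lt (by omega)]

theorem charpoly_blockDiagonal' {o : Type*} [Fintype o] [DecidableEq o]
    (P : o → Matrix n n ℂ) :
    (Matrix.blockDiagonal P).charpoly = ∏ k, (P k).charpoly := by
  have h : charmatrix (Matrix.blockDiagonal P)
      = Matrix.blockDiagonal fun k => charmatrix (P k) := by
    ext ⟨i, k⟩ ⟨j, l⟩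
    simp only [charmatrix_apply, Matrix.blockDiagonal_apply, Matrix.diagonal_apply,
      Prod.ext_iff]
    by_cases hkl : k = l <;> by_cases hij : i = j <;> simp [hkl, hij]
  rw [Matrix.charpoly, h, Matrix.det_blockDiagonal]
  rfl

theorem eval_charpoly' (A : Matrix n n ℂ) (x : ℂ) :
    A.charpoly.eval x = (x • (1 : Matrix n n ℂ) - A).det := by
  rw [Matrix.charpoly, ← Polynomial.coe_evalRingHom, RingHom.map_det]
  congr 1
  ext i j
  rcases eq_or_ne i j with rfl | hij
  · simp [charmatrix_apply_eq, Matrix.one_apply]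
  · simp [charmatrix_apply_ne _ _ _ hij, Matrix.one_apply_ne hij]

variable {m N : ℕ} [NeZero m]

/-- Partial cyclic product `M k * M (k+1) * ⋯ * M (k+t-1)` (indices mod m). -/
noncomputable def cycP (M : Fin m → Matrix (Fin N) (Fin N) ℂ) (k : Fin m) (t : ℕ) :
    Matrix (Fin N) (Fin N) ℂ :=
  Nat.rec 1 (fun t acc => acc * M (k + (t : Fin m))) t

lemma cyclicBlock_apply' (M : Fin m → Matrix (Fin N) (Fin N) ℂ)
    (k l : Fin m) (i j : Fin N) :
    Paper.cyclicBlock M (k, i) (l, j) = if l = k + 1 then M k i j else 0 := by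
  have hval : ((k + 1 : Fin m)).val = (k.val + 1) % m := by
    have h1 : (1 : Fin m) = ((1 : ℕ) : Fin m) := by norm_cast
    rw [Fin.add_def, h1, Fin.val_natCast, Nat.add_mod k.val 1 m,
      Nat.mod_eq_of_lt k.isLt]
  have h : (l.val = (k.val + 1) % m) ↔ l = k + 1 := by
    rw [Fin.ext_iff, hval]
  simp only [Paper.cyclicBlock]
  exact if_congr h rfl rfl

lemma cyclicBlock_pow_apply (M : Fin m → Matrix (Fin N) (Fin N) ℂ) (t : ℕ)
    (k : Fin m) (i : Fin N) (l : Fin m) (j : Fin N) :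
    (Paper.cyclicBlock M ^ t) (k, i) (l, j)
      = if l = k + (t : Fin m) then cycP M k t i j else 0 := by
  induction t generalizing l j with
  | zero =>
    simp only [pow_zero, Nat.cast_zero, add_zero]
    rcases eq_or_ne l k with rfl | h
    · show (1 : Matrix (Fin m × Fin N) (Fin m × Fin N) ℂ) (l, i) (l, j)
        = if l = l then (1 : Matrix (Fin N) (Fin N) ℂ) i j else 0
      simp [Matrix.one_apply, Prod.ext_iff]
    · show (1 : Matrix (Fin m × Fin N) (Fin m × Fin N) ℂ) (k, i) (l, j)
        = if l = k then (1 : Matrix (Fin N) (Fin N) ℂ) i j else 0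
      simp [Matrix.one_apply, Prod.ext_iff, h, Ne.symm h]
  | succ t ih =>
    rw [pow_succ, Matrix.mul_apply, Fintype.sum_prod_type]
    have key : ∀ c : Fin m, ∑ r : Fin N,
        (Paper.cyclicBlock M ^ t) (k, i) (c, r) * Paper.cyclicBlock M (c, r) (l, j)
        = if c = k + (t : Fin m) then
            (if l = c + 1 then (cycP M k t * M c) i j else 0) else 0 := by
      intro c
      by_cases hc : c = k + (t : Fin m)
      · subst hc
        simp only [ih, if_pos rfl, cyclicBlock_apply']
        by_cases hl : l = k + (t : Fin m) + 1
        · simp [hl, Matrix.mul_apply]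
        · simp [hl]
      · simp [ih, hc]
    rw [Finset.sum_congr rfl fun c _ => key c, Finset.sum_ite_eq' Finset.univ]
    simp only [Finset.mem_univ, if_true]
    have hcast : (((t : ℕ) + 1 : ℕ) : Fin m) = (t : Fin m) + 1 := by push_cast; ring
    rw [hcast, ← add_assoc]
    rfl

lemma cycP_add (M : Fin m → Matrix (Fin N) (Fin N) ℂ) (k : Fin m) (s t : ℕ) :
    cycP M k (s + t) = cycP M k s * cycP M (k + (s : Fin m)) t := by
  induction t with
  | zero => show cycP M k s = cycP M k s * 1; rw [mul_one]
  | succ t ih =>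
    show cycP M k (s + t) * M (k + ((s + t : ℕ) : Fin m))
      = cycP M k s * (cycP M (k + (s : Fin m)) t * M (k + (s : Fin m) + (t : Fin m)))
    rw [ih, mul_assoc]
    congr 2
    push_cast
    rw [add_assoc]

lemma cycP_zero_eq_take (M : Fin m → Matrix (Fin N) (Fin N) ℂ) (t : ℕ) (ht : t ≤ m) :
    cycP M 0 t = ((List.ofFn M).take t).prod := by
  induction t with
  | zero => rfl
  | succ t ih =>
    have htm : t < m := ht
    have hlen : t < (List.ofFn M).length := by simpa using htm
    rw [List.prod_take_succ _ _ hlen]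
    show cycP M 0 t * M (0 + (t : Fin m)) = _
    rw [ih (le_of_lt htm)]
    congr 1
    rw [List.getElem_ofFn]
    congr 1
    rw [zero_add]
    exact Fin.ext (by rw [Fin.val_natCast, Nat.mod_eq_of_lt htm])

lemma cycP_zero_m (M : Fin m → Matrix (Fin N) (Fin N) ℂ) :
    cycP M 0 m = Paper.ordProd M := by
  rw [cycP_zero_eq_take M m le_rfl, Paper.ordProd]
  congr 1
  exact List.take_of_length_le (by simp)

lemma charpoly_cycP (M : Fin m → Matrix (Fin N) (Fin N) ℂ) (k : Fin m) :
    (cycP M k m).charpoly = (Paper.ordProd M).charpoly := by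
  have hk : ((k.val : ℕ) : Fin m) = k := Fin.cast_val_eq_self k
  have h1 : cycP M k m = cycP M k (m - k.val) * cycP M 0 (k.val) := by
    have hthis := cycP_add M k (m - k.val) (k.val)
    rw [show (m - k.val) + k.val = m from by omega] at hthis
    have harg : k + (((m - k.val : ℕ)) : Fin m) = 0 := by
      rcases Nat.eq_zero_or_pos k.val with h0 | h0
      · have hk0 : k = 0 := by ext; simpa using h0
        subst hk0
        simp
      · have hlt : m - k.val < m := by omega
        apply Fin.ext
        rw [Fin.add_def, Fin.val_natCast, Nat.mod_eq_of_lt hlt]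
        have hsum : k.val + (m - k.val) = m := by omega
        simp [hsum]
    rw [harg] at hthis
    exact hthis
  have h2 : cycP M 0 m = cycP M 0 (k.val) * cycP M k (m - k.val) := by
    have hthis := cycP_add M 0 (k.val) (m - k.val)
    rw [show k.val + (m - k.val) = m from by omega, zero_add, hk] at hthis
    exact hthis
  rw [h1, ← cycP_zero_m M, h2, _root_.charpoly_mul_comm']

lemma charpoly_cyclicBlock_pow (M : Fin m → Matrix (Fin N) (Fin N) ℂ) :
    (Paper.cyclicBlock M ^ m).charpoly = (Paper.ordProd M).charpoly ^ m := by
  have hrep : Paper.cyclicBlock M ^ m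
      = (Matrix.reindex (Equiv.prodComm (Fin N) (Fin m)) (Equiv.prodComm (Fin N) (Fin m))
          (Matrix.blockDiagonal fun k : Fin m => cycP M k m)) := by
    ext ⟨k, i⟩ ⟨l, j⟩
    rw [cyclicBlock_pow_apply]
    simp only [Matrix.reindex_apply, Matrix.submatrix_apply, Equiv.prodComm_symm,
      Equiv.prodComm_apply, Prod.swap_prod_mk, Matrix.blockDiagonal_apply,
      Fin.natCast_self, add_zero]
    by_cases h : l = k
    · subst h; simp
    · simp [h, Ne.symm h]
  rw [hrep, Matrix.charpoly_reindex, charpoly_blockDiagonal']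
  rw [Finset.prod_congr rfl fun k _ => charpoly_cycP M k, Finset.prod_const,
    Finset.card_univ, Fintype.card_fin]

end CyclicAux

/-- The `m`-th power of the cyclic block matrix has characteristic
polynomial the `m`-th power of that of the product, so its eigenvalue multiset is `m` copies
of the eigenvalue multiset of the product. -/
theorem cyclic_block_power_det (m N : ℕ) (hm : 1 ≤ m)
    (M : Fin m → Matrix (Fin N) (Fin N) ℂ) :
    (∀ x : ℂ,
      Matrix.det (x • (1 : Matrix (Fin m × Fin N) (Fin m × Fin N) ℂ) - (Paper.cyclicBlock M) ^ m)
        = (Matrix.det (x • (1 : Matrix (Fin N) (Fin N) ℂ) - Paper.ordProd M)) ^ m) ∧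
    ((Paper.cyclicBlock M ^ m).charpoly.roots = m • (Paper.ordProd M).charpoly.roots) := by
  haveI : NeZero m := ⟨by omega⟩
  have hcp := charpoly_cyclicBlock_pow M
  constructor
  · intro x
    rw [← eval_charpoly', ← eval_charpoly', hcp, Polynomial.eval_pow]
  · rw [hcp, Polynomial.roots_pow]
end
end

section
/- Let m ≥ 1, let ρ₁, …, ρ_{2m} ∈ ℝ, and let σ' : {1, …, 2m} → {1, …, 2m} be a map with σ'(a) ∉ {a, a−m, a+m} for every a. Define the linear operator Σ on 2m×2m complex matrices by Σ(A)_{ab} := A_{σ'(a)σ'(a)} δ_{ab} + ρ_a A_{σ'(a)a} δ_{σ'(a)b}. Let z, η, a ∈ ℂ satisfy (a+η)² ≠ |z|² and a = (a+η)/(|z|² − (a+η)²). Set q := [[η I_m, z I_m],[z̄ I_m, η I_m]] and Γ := [[a I_m, z((a+η)² − |z|²)^{-1} I_m],[z̄((a+η)² − |z|²)^{-1} I_m, a I_m]]. Then Σ(Γ) = a I_{2m}, the matrix q + Σ(Γ) is invertible, and Γ = −(q + Σ(Γ))^{-1} = −[[(a+η) I_m, z I_m],[z̄ I_m, (a+η)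 I_m]]^{-1}. -/
open MeasureTheory ProbabilityTheory Filter Topology Matrix
open scoped ENNReal NNReal

noncomputable section

/-- The explicit solution of the matrix-valued fixed point equation. -/
theorem fixed_point_solution (m : ℕ) (hm : 1 ≤ m) (ρ : Fin m ⊕ Fin m → ℝ)
    (σ' : Fin m ⊕ Fin m → Fin m ⊕ Fin m)
    (hσ : ∀ a, σ' a ≠ a ∧
      σ' a ≠ Sum.elim (fun x : Fin m => (Sum.inr x : Fin m ⊕ Fin m)) (fun x => Sum.inl x) a)
    (z η a : ℂ) (hne : (a + η) ^ 2 ≠ z * starRingEnd ℂ z)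
    (hfix : a = (a + η) / (z * starRingEnd ℂ z - (a + η) ^ 2)) :
    let Sig : Matrix (Fin m ⊕ Fin m) (Fin m ⊕ Fin m) ℂ →
        Matrix (Fin m ⊕ Fin m) (Fin m ⊕ Fin m) ℂ :=
      fun A => Matrix.of fun a' b => (if a' = b then A (σ' a') (σ' a') else 0)
        + (if σ' a' = b then (ρ a' : ℂ) * A (σ' a') a' else 0)
    let q : Matrix (Fin m ⊕ Fin m) (Fin m ⊕ Fin m) ℂ :=
      Matrix.fromBlocks (η • 1) (z • 1) ((starRingEnd ℂ z) • 1) (η • 1)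
    let Γ : Matrix (Fin m ⊕ Fin m) (Fin m ⊕ Fin m) ℂ :=
      Matrix.fromBlocks (a • 1) ((z * ((a + η) ^ 2 - z * starRingEnd ℂ z)⁻¹) • 1)
        (((starRingEnd ℂ z) * ((a + η) ^ 2 - z * starRingEnd ℂ z)⁻¹) • 1) (a • 1)
    Sig Γ = a • 1 ∧ IsUnit (q + Sig Γ) ∧ Γ = -(q + Sig Γ)⁻¹ ∧
      Γ = -(Matrix.fromBlocks ((a + η) • 1) (z • 1) ((starRingEnd ℂ z) • 1) ((a + η) • 1))⁻¹ := by
  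
  intro Sig q Γ
  set w := a + η with hw
  set d := w ^ 2 - z * starRingEnd ℂ z with hdd
  have hd : d ≠ 0 := sub_ne_zero.mpr hne
  have hz : z * starRingEnd ℂ z - w ^ 2 ≠ 0 := by
    intro h; exact hd (by rw [hdd]; rw [sub_eq_zero] at h ⊢; exact h.symm)
  have ha : a * d = -w := by
    rw [eq_div_iff hz] at hfix
    rw [hdd]; linear_combination -hfix
  -- step 1
  have hSig : Sig Γ = a • 1 := by
    ext x y
    simp only [Sig, Matrix.of_apply, Matrix.smul_apply, Matrix.one_apply, smul_eq_mul]
    by_cases hxy : x = y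
    · subst hxy
      rw [if_pos rfl, if_neg (hσ x).1, add_zero, if_pos rfl, mul_one]
      rcases σ' x with s | s <;> simp [Γ, Matrix.one_apply]
    · rw [if_neg hxy, if_neg hxy, mul_zero, zero_add]
      by_cases hsx : σ' x = y
      · rw [if_pos hsx]
        have h1 := (hσ x).1
        have h2 := (hσ x).2
        have : Γ (σ' x) x = 0 := by
          rcases hs : σ' x with s | s <;> rcases hx : x with t | t <;>
            rw [hs, hx] at h1 h2 <;>
            simp only [Sum.elim_inl, Sum.elim_inr, ne_eq, Sum.inl.injEq, Sum.inr.injEq] at h1 h2 <;>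
            simp only [Γ, Matrix.fromBlocks_apply₁₁, Matrix.fromBlocks_apply₁₂,
              Matrix.fromBlocks_apply₂₁, Matrix.fromBlocks_apply₂₂, Matrix.smul_apply,
              Matrix.one_apply, smul_eq_mul]
          · rw [if_neg h1, mul_zero]
          · rw [if_neg h2, mul_zero]
          · rw [if_neg h2, mul_zero]
          · rw [if_neg h1, mul_zero]
        rw [this, mul_zero]
      · rw [if_neg hsx]
  refine ⟨hSig, ?_⟩
  have hsm : (a • (1 : Matrix (Fin m ⊕ Fin m) (Fin m ⊕ Fin m) ℂ)) =
      Matrix.fromBlocks (a • 1) 0 0 (a • 1) := by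
    rw [← Matrix.fromBlocks_one, Matrix.fromBlocks_smul]; simp
  have hM : q + Sig Γ = Matrix.fromBlocks (w • 1) (z • 1) ((starRingEnd ℂ z) • 1) (w • 1) := by
    rw [hSig, hsm]
    simp only [q, Matrix.fromBlocks_add, add_zero]
    rw [← add_smul, add_comm η a]
  have hΓ : Γ = Matrix.fromBlocks (a • 1) ((z * d⁻¹) • 1) (((starRingEnd ℂ z) * d⁻¹) • 1) (a • 1) := rfl
  have e1 : -a * w + -(starRingEnd ℂ z * d⁻¹) * z = 1 := by
    field_simp
    rw [hdd]; linear_combination (-w) * ha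
  have e2 : -(z * d⁻¹) * w + -a * z = 0 := by
    field_simp
    linear_combination (-z) * ha
  have e3 : -a * starRingEnd ℂ z + -(starRingEnd ℂ z * d⁻¹) * w = 0 := by
    field_simp
    linear_combination (-(starRingEnd ℂ z)) * ha
  have e4 : -(z * d⁻¹) * starRingEnd ℂ z + -a * w = 1 := by
    field_simp
    rw [hdd]; linear_combination (-w) * ha
  have hprod : (Matrix.fromBlocks (w • 1) (z • 1) ((starRingEnd ℂ z) • 1) (w • 1)) * (-Γ) = 1 := by
    rw [hΓ, Matrix.fromBlocks_neg, Matrix.fromBlocks_multiply]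
    simp only [Matrix.smul_mul, Matrix.mul_smul, Matrix.one_mul, Matrix.mul_neg, smul_neg,
      smul_smul, ← neg_smul, ← add_smul, ← neg_add]
    rw [e1, e2, e3, e4]
    simp only [one_smul, zero_smul]
    exact Matrix.fromBlocks_one
  rw [hM]
  refine ⟨(Matrix.isUnit_iff_isUnit_det _).mpr (Matrix.isUnit_det_of_right_inverse hprod), ?_, ?_⟩ <;>
    rw [Matrix.inv_eq_right_inv hprod, neg_neg]
end
end
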